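/- arXiv:2605.07488 — 2 statements merged into one kernel-verified Lean document; each statement's English description precedes it below -/
import Mathlib

section
/- Let L : ℝ^n → ℝ be differentiable with β-Lipschitz gradient, θ ∈ ℝ^n, and let gᵢ, gⱼ ∈ ℝ^n be two sample gradients with gᵢ, gⱼ not both zero. Define scores sᵢ = ⟨∇L(θ), gᵢ⟩ and sⱼ = ⟨∇L(θ), gⱼ⟩, and utilities Δᵢ = L(θ) - L(θ - η•gᵢ), Δⱼ = L(θ) - L(θ - η•gⱼ). If sᵢ - sⱼ ≥ γ > 0 and 0 < η < 2γ / (β(‖gᵢ‖² + ‖gⱼ‖²)), then Δᵢ > Δⱼ. -/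
open scoped RealInnerProductSpace

lemma ost_taylor_bound {n : ℕ} (L : EuclideanSpace ℝ (Fin n) → ℝ) (β : ℝ)
    (hβ : 0 < β)
    (hdiff : Differentiable ℝ L)
    (hlip : ∀ x y, ‖gradient L x - gradient L y‖ ≤ β * ‖x - y‖)
    (θ g : EuclideanSpace ℝ (Fin n)) (η : ℝ) (hη0 : 0 ≤ η) :
    |(L θ - L (θ - η • g)) - η * ⟪gradient L θ, g⟫| ≤ β / 2 * η ^ 2 * ‖g‖ ^ 2 := by
  set s : ℝ := ⟪gradient L θ, g⟫ with hs
  have hgrad_cont : Continuous (gradient L) := by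
    refine (LipschitzWith.of_dist_le_mul (K := ⟨β, hβ.le⟩) ?_).continuous
    intro x y
    rw [dist_eq_norm, dist_eq_norm]; exact hlip x y
  have hpath : ∀ t : ℝ, HasDerivAt (fun u : ℝ => θ - u • g) (-g) t := by
    intro t
    simpa using ((hasDerivAt_id t).smul_const g).const_sub θ
  have hderiv : ∀ t : ℝ,
      HasDerivAt (fun u : ℝ => L (θ - u • g)) (-⟪gradient L (θ - t • g), g⟫) t := by
    intro t
    have h1 := ((hdiff (θ - t • g)).hasGradientAt.hasFDerivAt).comp_hasDerivAt t (hpath t)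
    rw [InnerProductSpace.toDual_apply_apply, inner_neg_right] at h1
    exact h1
  have hcont : Continuous fun t : ℝ => -⟪gradient L (θ - t • g), g⟫ := by
    apply Continuous.neg
    exact Continuous.inner (hgrad_cont.comp (continuous_const.sub (continuous_id.smul continuous_const))) continuous_const
  have hFTC : ∫ t in (0:ℝ)..η, -⟪gradient L (θ - t • g), g⟫
      = L (θ - η • g) - L θ := by
    have := intervalIntegral.integral_eq_sub_of_hasDerivAt
      (f := fun u : ℝ => L (θ - u • g))
      (f' := fun t : ℝ => -⟪gradient L (θ - t • g), g⟫)
      (fun t _ => hderiv t) (hcont.intervalIntegrable 0 η)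
    simpa using this
  have hFTC' : L θ - L (θ - η • g) = ∫ t in (0:ℝ)..η, ⟪gradient L (θ - t • g), g⟫ := by
    have h2 : ∫ t in (0:ℝ)..η, ⟪gradient L (θ - t • g), g⟫
        = -∫ t in (0:ℝ)..η, -⟪gradient L (θ - t • g), g⟫ := by
      rw [← intervalIntegral.integral_neg]; simp
    rw [h2, hFTC]; ring
  have hbound : ∀ t ∈ Set.Icc (0:ℝ) η,
      |⟪gradient L (θ - t • g), g⟫ - s| ≤ β * t * ‖g‖ ^ 2 := by
    intro t ht
    have h1 : |⟪gradient L (θ - t • g), g⟫ - s|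
        = |⟪gradient L (θ - t • g) - gradient L θ, g⟫| := by
      rw [hs, inner_sub_left]
    rw [h1]
    calc |⟪gradient L (θ - t • g) - gradient L θ, g⟫|
        ≤ ‖gradient L (θ - t • g) - gradient L θ‖ * ‖g‖ := abs_real_inner_le_norm _ _
      _ ≤ (β * ‖(θ - t • g) - θ‖) * ‖g‖ := by
          gcongr; exact hlip _ _
      _ = β * t * ‖g‖ ^ 2 := by
          have : ‖(θ - t • g) - θ‖ = t * ‖g‖ := by
            have : (θ - t • g) - θ = -(t • g) := by abel
            rw [this, norm_neg, norm_smul, Real.norm_eq_abs, abs_of_nonneg ht.1]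
          rw [this]; ring
  have hintc : ∀ c : ℝ, ∫ t in (0:ℝ)..η, (s + c * t) = η * s + c * η ^ 2 / 2 := by
    intro c
    rw [intervalIntegral.integral_add (f := fun _ => s) (g := fun t => c * t) intervalIntegrable_const
      (((continuous_const.mul continuous_id) : Continuous fun t : ℝ => c * t).intervalIntegrable 0 η)]
    rw [intervalIntegral.integral_const, intervalIntegral.integral_const_mul, integral_id, smul_eq_mul]
    ring
  have hmid_int : IntervalIntegrable (fun t : ℝ => ⟪gradient L (θ - t • g), g⟫)
      MeasureTheory.volume 0 η := by
    have : Continuous fun t : ℝ => ⟪gradient L (θ - t • g), g⟫ := by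
      exact hcont.neg.congr (fun t => neg_neg _)
    exact this.intervalIntegrable 0 η
  have hlin_int : ∀ c : ℝ, IntervalIntegrable (fun t : ℝ => s + c * t)
      MeasureTheory.volume 0 η :=
    fun c => ((continuous_const.add (continuous_const.mul continuous_id)) : Continuous fun t : ℝ => s + c * t).intervalIntegrable 0 η
  have hupper : L θ - L (θ - η • g) ≤ η * s + (β * ‖g‖ ^ 2) * η ^ 2 / 2 := by
    rw [hFTC', ← hintc (β * ‖g‖ ^ 2)]
    apply intervalIntegral.integral_mono_on hη0 hmid_int (hlin_int _)
    intro t ht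
    have := (abs_le.mp (hbound t ht)).2
    nlinarith
  have hlower : η * s - (β * ‖g‖ ^ 2) * η ^ 2 / 2 ≤ L θ - L (θ - η • g) := by
    have h3 : η * s + (-(β * ‖g‖ ^ 2)) * η ^ 2 / 2 ≤ L θ - L (θ - η • g) := by
      rw [hFTC', ← hintc (-(β * ‖g‖ ^ 2))]
      apply intervalIntegral.integral_mono_on hη0 (hlin_int _) hmid_int
      intro t ht
      have := (abs_le.mp (hbound t ht)).1
      nlinarith
    nlinarith
  rw [abs_le]
  constructor <;> nlinarith

theorem ost_ranking_consistency {n : ℕ} (L : EuclideanSpace ℝ (Fin n) → ℝ) (β : ℝ)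
    (hβ : 0 < β)
    (hdiff : Differentiable ℝ L)
    (hlip : ∀ x y, ‖gradient L x - gradient L y‖ ≤ β * ‖x - y‖)
    (θ gi gj : EuclideanSpace ℝ (Fin n)) (hne : gi ≠ 0 ∨ gj ≠ 0)
    (γ η : ℝ) (hγ : 0 < γ)
    (hmargin : γ ≤ ⟪gradient L θ, gi⟫ - ⟪gradient L θ, gj⟫)
    (hη0 : 0 < η) (hη : η < 2 * γ / (β * (‖gi‖ ^ 2 + ‖gj‖ ^ 2))) :
    L θ - L (θ - η • gj) < L θ - L (θ - η • gi) := by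
  have hi := ost_taylor_bound L β hβ hdiff hlip θ gi η hη0.le
  have hj := ost_taylor_bound L β hβ hdiff hlip θ gj η hη0.le
  have hiL := (abs_le.mp hi).1
  have hjL := (abs_le.mp hj).2
  have hS : 0 < ‖gi‖ ^ 2 + ‖gj‖ ^ 2 := by
    rcases hne with h | h
    · have := norm_pos_iff.mpr h
      positivity
    · have := norm_pos_iff.mpr h
      positivity
  have hβS : 0 < β * (‖gi‖ ^ 2 + ‖gj‖ ^ 2) := by positivity
  have hη' : η * (β * (‖gi‖ ^ 2 + ‖gj‖ ^ 2)) < 2 * γ := by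
    rwa [← lt_div_iff₀ hβS]
  nlinarith [mul_pos hη0 (sub_pos.mpr hη'), sq_nonneg η]
end

section
/- Let L : ℝ^n → ℝ be differentiable with β-Lipschitz gradient, and let g₁, …, g_k ∈ ℝ^n be sample gradients. Fix θ and η > 0, and let Δᵢ = L(θ) - L(θ - η•gᵢ) and sᵢ = ⟨∇L(θ), gᵢ⟩. If ‖gᵢ‖ ≤ B for all i and the pairwise score margins satisfy |sᵢ - sⱼ| ≥ γ > β η B² for all i ≠ j, then the permutation sorting (Δᵢ) in decreasing order equals the permutation sorting (sᵢ) in decreasing order. -/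
open scoped RealInnerProductSpace

theorem quad_bound {n : ℕ} (L : EuclideanSpace ℝ (Fin n) → ℝ) (β : ℝ)
    (hdiff : Differentiable ℝ L)
    (hlip : ∀ x y, ‖gradient L x - gradient L y‖ ≤ β * ‖x - y‖)
    (θ v : EuclideanSpace ℝ (Fin n)) :
    |L (θ + v) - L θ - ⟪gradient L θ, v⟫| ≤ β * ‖v‖ ^ 2 / 2 := by
  set c : ℝ := ⟪gradient L θ, v⟫ with hc
  set f : ℝ → ℝ := fun t => L (θ + t • v) - L θ - t * c with hf
  set f' : ℝ → ℝ := fun t => ⟪gradient L (θ + t • v), v⟫ - c with hf'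
  have hderiv : ∀ t : ℝ, HasDerivAt f (f' t) t := by
    intro t
    have h1 : HasFDerivAt L ((InnerProductSpace.toDual ℝ _) (gradient L (θ + t • v)))
        (θ + t • v) := hasGradientAt_iff_hasFDerivAt.mp (hdiff _).hasGradientAt
    have h2 : HasDerivAt (fun t : ℝ => θ + t • v) v t := by
      simpa using ((hasDerivAt_id t).smul_const v).const_add θ
    have h3 := h1.comp_hasDerivAt t h2
    have h4 : HasDerivAt (fun t : ℝ => L θ + t * c) c t := by
      simpa using ((hasDerivAt_id t).mul_const c).const_add (L θ)
    have := h3.sub h4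
    simpa [f, f', InnerProductSpace.toDual_apply_apply, sub_sub, Function.comp_def, Pi.sub_def] using this
  have key : ∀ x ∈ Set.Icc (0:ℝ) 1, ‖f x‖ ≤ β * ‖v‖ ^ 2 * x ^ 2 / 2 := by
    refine image_norm_le_of_norm_deriv_right_le_deriv_boundary
      (f' := f') (B := fun t => β * ‖v‖ ^ 2 * t ^ 2 / 2) (B' := fun t => β * ‖v‖ ^ 2 * t)
      (fun x _ => (hderiv x).continuousAt.continuousWithinAt)
      (fun x _ => (hderiv x).hasDerivWithinAt)
      (by simp [f]) (fun x => ?_) (fun x hx => ?_)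
    · have h : HasDerivAt (fun t : ℝ => β * ‖v‖ ^ 2 * t ^ 2 / 2)
          (β * ‖v‖ ^ 2 * (↑2 * x ^ (2-1)) / 2) x :=
        ((hasDerivAt_pow 2 x).const_mul (β * ‖v‖ ^ 2)).div_const 2
      convert h using 1
      push_cast
      ring
    · have h1 : |(⟪gradient L (θ + x • v) - gradient L θ, v⟫ : ℝ)| ≤
          ‖gradient L (θ + x • v) - gradient L θ‖ * ‖v‖ := abs_real_inner_le_norm _ _
      have h2 : ‖gradient L (θ + x • v) - gradient L θ‖ ≤ β * ‖x • v‖ := by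
        simpa using hlip (θ + x • v) θ
      have hx0 : (0:ℝ) ≤ x := hx.1
      have heq : ‖f' x‖ = |(⟪gradient L (θ + x • v) - gradient L θ, v⟫ : ℝ)| := by
        simp [f', inner_sub_left, hc]
      rw [heq]
      calc |(⟪gradient L (θ + x • v) - gradient L θ, v⟫ : ℝ)|
          ≤ ‖gradient L (θ + x • v) - gradient L θ‖ * ‖v‖ := h1
        _ ≤ β * ‖x • v‖ * ‖v‖ :=
            mul_le_mul_of_nonneg_right h2 (norm_nonneg _)
        _ = β * ‖v‖ ^ 2 * x := by
            rw [norm_smul, Real.norm_eq_abs, abs_of_nonneg hx0]; ring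
  have := key 1 (by norm_num)
  simpa [f, Real.norm_eq_abs] using this

theorem ost_topk_consistency {n k : ℕ} (L : EuclideanSpace ℝ (Fin n) → ℝ) (β : ℝ)
    (hβ : 0 < β)
    (hdiff : Differentiable ℝ L)
    (hlip : ∀ x y, ‖gradient L x - gradient L y‖ ≤ β * ‖x - y‖)
    (θ : EuclideanSpace ℝ (Fin n)) (g : Fin k → EuclideanSpace ℝ (Fin n))
    (η B γ : ℝ) (hη : 0 < η) (hB : ∀ i, ‖g i‖ ≤ B)
    (hγ : 0 < γ) (hγB : β * η * B ^ 2 < γ)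
    (hmargin : ∀ i j, i ≠ j →
      γ ≤ |⟪gradient L θ, g i⟫ - ⟪gradient L θ, g j⟫|) :
    ∀ σ : Equiv.Perm (Fin k),
      Antitone (fun i => L θ - L (θ - η • g (σ i))) ↔
      Antitone (fun i => ⟪gradient L θ, g (σ i)⟫) := by
  set s : Fin k → ℝ := fun i => ⟪gradient L θ, g i⟫ with hs
  set Δ : Fin k → ℝ := fun i => L θ - L (θ - η • g i) with hΔ
  have herr : ∀ i, |Δ i - η * s i| ≤ β * η ^ 2 * B ^ 2 / 2 := by
    intro i
    have h1 := quad_bound L β hdiff hlip θ (-(η • g i))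
    have h2 : (⟪gradient L θ, -(η • g i)⟫ : ℝ) = -(η * s i) := by
      simp only [inner_neg_right, real_inner_smul_right, hs]
    rw [h2] at h1
    have h3 : θ + -(η • g i) = θ - η • g i := by abel
    rw [h3] at h1
    have h4 : ‖(-(η • g i))‖ ^ 2 = η ^ 2 * ‖g i‖ ^ 2 := by
      rw [norm_neg, norm_smul, mul_pow, Real.norm_eq_abs, sq_abs]
    have h5 : ‖g i‖ ^ 2 ≤ B ^ 2 := by
      have := hB i
      nlinarith [norm_nonneg (g i)]
    have h6 : |Δ i - η * s i| = |L (θ - η • g i) - L θ - -(η * s i)| := by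
      rw [← abs_neg]; congr 1; simp [hΔ]; ring
    rw [h6]
    calc |L (θ - η • g i) - L θ - -(η * s i)| ≤ β * ‖(-(η • g i))‖ ^ 2 / 2 := h1
      _ = β * (η ^ 2 * ‖g i‖ ^ 2) / 2 := by rw [h4]
      _ ≤ β * η ^ 2 * B ^ 2 / 2 := by
          have hb2 : 0 ≤ β * η ^ 2 := by positivity
          nlinarith
  have hkey : ∀ a b, γ ≤ s a - s b → Δ b < Δ a := by
    intro a b hab
    have ha := herr a
    have hb := herr b
    obtain ⟨ha1, ha2⟩ := abs_le.mp ha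
    obtain ⟨hb1, hb2⟩ := abs_le.mp hb
    have h0 : η * (s a - s b) = η * s a - η * s b := by ring
    have h1 := mul_lt_mul_of_pos_left hγB hη
    have h2 : η * (β * η * B ^ 2) = β * η ^ 2 * B ^ 2 := by ring
    have h3 : η * γ ≤ η * (s a - s b) := by
      exact mul_le_mul_of_nonneg_left hab hη.le
    clear_value s Δ
    linarith
  intro σ
  constructor
  · intro h i j hij
    rcases eq_or_lt_of_le hij with rfl | hlt
    · exact le_refl _
    · have hne : σ i ≠ σ j := fun e => hlt.ne (σ.injective e)
      rcases le_abs.mp (hmargin (σ i) (σ j) hne) with hm | hm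
      · simp only [hs] at hm ⊢
        linarith
      · exfalso
        have := hkey (σ j) (σ i) (by linarith)
        have h2 := h hij
        simp only [hΔ] at this
        exact absurd h2 (not_le.mpr this)
  · intro h i j hij
    rcases eq_or_lt_of_le hij with rfl | hlt
    · exact le_refl _
    · have hne : σ i ≠ σ j := fun e => hlt.ne (σ.injective e)
      rcases le_abs.mp (hmargin (σ i) (σ j) hne) with hm | hm
      · have := hkey (σ i) (σ j) hm
        simp only [hΔ] at this
        exact this.le
      · exfalso
        have h2 := h hij
        simp only [hs] at h2 hm
        linarith
end
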